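/- For a > 1/2, a ≠ 1, and probability vector w with positive entries, the minimum of L_a(w,l) over all length vectors satisfying the Kraft inequality Σ 2^{-l(i)} ≤ 1 (the Huffman-like optimum L_a^h(w)) satisfies H_α(w) ≤ L_a^h(w), where α = 1/(1 + log₂ a). -/

import Mathlib

open Real Finset

/-- Full binary tree: every internal node has two children. -/
inductive BTree where
  | leaf : BTree
  | node : BTree → BTree → BTree

namespace BTree

/-- Depths of the leaves, read in left-to-right (inorder) order. -/
def depths : BTree → List ℕ
  | leaf => [0]
  | node l r => (l.depths ++ r.depths).map (· + 1)

/-- Number of leaves. -/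
def numLeaves (t : BTree) : ℕ := t.depths.length

/-- The splitting point: smallest (1-based) leaf index of the right subtree. -/
def splitPoint : BTree → ℕ
  | leaf => 1
  | node l _ => l.numLeaves + 1

end BTree

/-- Binary tree possibly having single-child internal nodes. -/
inductive PTree where
  | leaf : PTree
  | node1 : PTree → PTree
  | node2 : PTree → PTree → PTree

def PTree.depths : PTree → List ℕ
  | .leaf => [0]
  | .node1 t => t.depths.map (· + 1)
  | .node2 l r => (l.depths ++ r.depths).map (· + 1)

/-- `SubtreeAt t' o t` : `t'` is a subtree of `t` whose leaves are the leaves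
`o, o+1, …` (0-based offset `o`) of `t`. -/
inductive SubtreeAt : BTree → ℕ → BTree → Prop
  | refl (t : BTree) : SubtreeAt t 0 t
  | left {t' : BTree} {o : ℕ} {l r : BTree} : SubtreeAt t' o l → SubtreeAt t' o (BTree.node l r)
  | right {t' : BTree} {o : ℕ} {l r : BTree} : SubtreeAt t' o r →
      SubtreeAt t' (l.numLeaves + o) (BTree.node l r)

/-- Weighted exponential cost `∑ w(i)·a^{l(i)}` of a tree, weights given as a list. -/
noncomputable def cost (a : ℝ) (ws : List ℝ) (t : BTree) : ℝ :=
  (List.zipWith (fun wi d => wi * a ^ d) ws t.depths).sum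

/-- `L_a(w,l) = log_a ∑ w(i) a^{l(i)}`, `Fin`-indexed. -/
noncomputable def La {n : ℕ} (a : ℝ) (w : Fin n → ℝ) (l : Fin n → ℕ) : ℝ :=
  Real.logb a (∑ i, w i * a ^ (l i))

/-- `L_a(w,l)`, ℕ-indexed with `n` symbols. -/
noncomputable def LaN (a : ℝ) (n : ℕ) (w : ℕ → ℝ) (l : ℕ → ℕ) : ℝ :=
  Real.logb a (∑ i ∈ Finset.range n, w i * a ^ (l i))

/-- Costs achievable by alphabetic binary trees on `n` leaves with weights `w`. -/
noncomputable def AlphaSet (a : ℝ) (n : ℕ) (w : ℕ → ℝ) : Set ℝ :=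
  {x | ∃ (lT : ℕ → ℕ) (T : BTree), T.depths = (List.range n).map lT ∧ x = LaN a n w lT}

/-- The indices `j..j+k` form a plateau of `l` which is a strict local minimum,
with strictly larger values at indices `j-1` and `j+k+1`, entirely interior to `0..n-1`. -/
def PlateauMin (n : ℕ) (l : ℕ → ℕ) (j k : ℕ) : Prop :=
  0 < j ∧ j + k + 1 < n ∧ l j < l (j - 1) ∧ (∀ m, j ≤ m → m ≤ j + k → l m = l j) ∧
    l j < l (j + k + 1)

/-- The natural number a binary codeword (MSB first) represents. -/
def codeToNat (c : List Bool) : ℕ := c.foldl (fun n b => 2 * n + cond b 1 0) 0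

/-- The `k`-bit binary codeword (MSB first) representing `m`. -/
def natToCode (k m : ℕ) : List Bool := (List.range k).map (fun i => m.testBit (k - 1 - i))

/-- `H_α(w)` lower-bounds `L_a(w,l)` for every Kraft-feasible
length vector, hence lower-bounds the Huffman-like optimum `L_a^h(w)`. -/
theorem stmt10 (n : ℕ) (a : ℝ) (ha : 1 / 2 < a) (ha1 : a ≠ 1)
    (w : Fin n → ℝ) (hw : ∀ i, 0 < w i) (hsum : ∑ i, w i = 1)
    (α : ℝ) (hα : α = 1 / (1 + Real.logb 2 a)) :
    ∀ l : Fin n → ℕ, (∑ i, ((2 : ℝ) ^ l i)⁻¹ ≤ 1) →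
      (1 / (1 - α)) * Real.logb 2 (∑ i, w i ^ α) ≤ La a w l := by
  intro l hkraft
  have ha0 : (0:ℝ) < a := by linarith
  set t := Real.logb 2 a with htdef
  have h2a : (2:ℝ) ^ t = a := Real.rpow_logb (by norm_num) (by norm_num) ha0
  have hl2 : (0:ℝ) < Real.log 2 := Real.log_pos (by norm_num)
  have hloga : Real.log a = t * Real.log 2 := by
    rw [htdef, Real.logb, div_mul_cancel₀ _ hl2.ne']
  have ht0 : t ≠ 0 := by
    intro h
    rw [h, Real.rpow_zero] at h2a
    exact ha1 h2a.symm
  have ht1 : -1 < t := by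
    have h := Real.logb_lt_logb (b := 2) (by norm_num) (by norm_num : (0:ℝ) < 1/2) ha
    have h12 : Real.logb 2 ((1:ℝ)/2) = -1 := by
      rw [one_div, Real.logb_inv, Real.logb_self_eq_one (by norm_num)]
    rw [h12] at h
    exact h
  have h1t : (0:ℝ) < 1 + t := by linarith
  have hα0 : 0 < α := by rw [hα]; positivity
  have htα : t * α = 1 - α := by rw [hα]; field_simp; ring
  have h1α : 1 - α = t / (1 + t) := by rw [hα]; field_simp; ring
  rcases Nat.eq_zero_or_pos n with hn | hn
  · subst hn
    simp at hsum
  haveI : Nonempty (Fin n) := ⟨⟨0, hn⟩⟩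
  set S := ∑ i, w i * a ^ (l i) with hSdef
  set Sα := ∑ i, w i ^ α with hSαdef
  set K := ∑ i, ((2:ℝ) ^ l i)⁻¹ with hKdef
  have hS : 0 < S :=
    Finset.sum_pos (fun i _ => mul_pos (hw i) (pow_pos ha0 _)) Finset.univ_nonempty
  have hSα : 0 < Sα :=
    Finset.sum_pos (fun i _ => Real.rpow_pos_of_pos (hw i) _) Finset.univ_nonempty
  have hK0 : (0:ℝ) ≤ K :=
    Finset.sum_nonneg fun i _ => by positivity
  have alr : ∀ i : Fin n, (a:ℝ) ^ (l i) = (2:ℝ) ^ (t * (l i : ℝ)) := by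
    intro i
    rw [← h2a, ← Real.rpow_natCast ((2:ℝ) ^ t) (l i), ← Real.rpow_mul (by norm_num)]
  have twol : ∀ i : Fin n, ((2:ℝ) ^ (l i))⁻¹ = (2:ℝ) ^ (-(l i : ℝ)) := by
    intro i
    rw [← Real.rpow_natCast 2 (l i), ← Real.rpow_neg (by norm_num)]
  have hLa : La a w l = Real.logb 2 S / t := by
    rw [La, ← hSdef, Real.logb, Real.logb, hloga, div_div, mul_comm]
  rw [hLa]
  rcases lt_or_gt_of_ne ht0 with htneg | htpos
  · -- case t < 0, i.e. 1/2 < a < 1, α > 1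
    have hα1 : 1 < α := by
      rw [hα, lt_div_iff₀ h1t]; linarith
    have hαm1 : (0:ℝ) < α - 1 := by linarith
    have hpq : Real.HolderConjugate α (α / (α - 1)) := by
      refine Real.holderConjugate_iff.mpr ⟨hα1, ?_⟩
      rw [inv_div]
      field_simp
      ring
    have htq : t * (α / (α - 1)) = -1 := by
      rw [mul_div_assoc']
      rw [htα]
      rw [div_eq_iff hαm1.ne']
      ring
    have hold := Real.inner_le_Lp_mul_Lq_of_nonneg (s := Finset.univ) hpq
      (f := fun i => w i) (g := fun i => (a:ℝ) ^ (l i))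
      (fun i _ => (hw i).le) (fun i _ => by positivity)
    have hgq : ∀ i : Fin n, ((a:ℝ) ^ (l i)) ^ (α / (α - 1)) = ((2:ℝ) ^ (l i))⁻¹ := by
      intro i
      rw [alr i, twol i, ← Real.rpow_mul (by norm_num : (0:ℝ) ≤ 2)]
      congr 1
      linear_combination (l i : ℝ) * htq
    simp only [hgq] at hold
    rw [one_div_div] at hold
    have hKle : K ^ ((α - 1) / α) ≤ 1 :=
      Real.rpow_le_one hK0 hkraft (by positivity)
    have h2 : S ≤ Sα ^ (1/α) := by
      calc S ≤ Sα ^ (1/α) * K ^ ((α - 1)/α) := hold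
        _ ≤ Sα ^ (1/α) * 1 := by
            apply mul_le_mul_of_nonneg_left hKle (Real.rpow_nonneg hSα.le _)
        _ = Sα ^ (1/α) := mul_one _
    have hlog : α * Real.logb 2 S ≤ Real.logb 2 Sα := by
      have h3 := (Real.logb_le_logb (by norm_num : (1:ℝ) < 2) hS
        (Real.rpow_pos_of_pos hSα _)).mpr h2
      have h4 : Real.logb 2 (Sα ^ (1/α)) = (1/α) * Real.logb 2 Sα := by
        rw [Real.logb, Real.log_rpow hSα, Real.logb]; ring
      rw [h4] at h3
      rw [← le_div_iff₀' hα0]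
      rw [div_eq_mul_inv, mul_comm, ← one_div]
      exact h3
    have hneg : 1 / (1 - α) ≤ 0 := by
      apply le_of_lt
      apply div_neg_of_pos_of_neg one_pos
      linarith
    have h5 := mul_le_mul_of_nonpos_left hlog hneg
    refine h5.trans_eq ?_
    rw [h1α]
    rw [hα]
    field_simp
  · -- case t > 0, i.e. a > 1, α < 1
    have hα1 : α < 1 := by
      rw [hα, div_lt_one h1t]; linarith
    have h1αpos : (0:ℝ) < 1 - α := by linarith
    have hpq : Real.HolderConjugate (1/α) (1/(1-α)) := by
      refine Real.holderConjugate_iff.mpr ⟨?_, ?_⟩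
      · rw [lt_one_div one_pos hα0]; linarith
      · simp only [one_div, inv_inv]; ring
    have hold := Real.inner_le_Lp_mul_Lq_of_nonneg (s := Finset.univ) hpq
      (f := fun i => (w i * a ^ (l i)) ^ α) (g := fun i => (((2:ℝ) ^ (l i))⁻¹) ^ (1 - α))
      (fun i _ => Real.rpow_nonneg (mul_nonneg (hw i).le (by positivity)) _)
      (fun i _ => Real.rpow_nonneg (by positivity) _)
    have hfg : ∀ i : Fin n, (w i * a ^ (l i)) ^ α * (((2:ℝ) ^ (l i))⁻¹) ^ (1 - α)
        = w i ^ α := by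
      intro i
      rw [Real.mul_rpow (hw i).le (by positivity : (0:ℝ) ≤ a ^ (l i)), alr i, twol i,
        ← Real.rpow_mul (by norm_num : (0:ℝ) ≤ 2),
        ← Real.rpow_mul (by norm_num : (0:ℝ) ≤ 2),
        mul_assoc, ← Real.rpow_add (by norm_num : (0:ℝ) < 2)]
      have h0 : t * (l i : ℝ) * α + -(l i : ℝ) * (1 - α) = 0 := by
        linear_combination (l i : ℝ) * htα
      rw [h0, Real.rpow_zero, mul_one]
    have hf1 : ∀ i : Fin n, ((w i * a ^ (l i)) ^ α) ^ (1/α) = w i * a ^ (l i) := by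
      intro i
      rw [← Real.rpow_mul (mul_nonneg (hw i).le (by positivity)), mul_one_div,
        div_self hα0.ne', Real.rpow_one]
    have hg1 : ∀ i : Fin n,
        ((((2:ℝ) ^ (l i))⁻¹) ^ (1 - α)) ^ (1/(1-α)) = ((2:ℝ) ^ (l i))⁻¹ := by
      intro i
      rw [← Real.rpow_mul (by positivity), mul_one_div, div_self h1αpos.ne', Real.rpow_one]
    simp only [hfg, hf1, hg1, one_div_one_div] at hold
    have hKle : K ^ (1 - α) ≤ 1 := Real.rpow_le_one hK0 hkraft h1αpos.le
    have h2 : Sα ≤ S ^ α := by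
      calc Sα ≤ S ^ α * K ^ (1 - α) := hold
        _ ≤ S ^ α * 1 := mul_le_mul_of_nonneg_left hKle (Real.rpow_nonneg hS.le _)
        _ = S ^ α := mul_one _
    have hlog : Real.logb 2 Sα ≤ α * Real.logb 2 S := by
      have h3 := (Real.logb_le_logb (by norm_num : (1:ℝ) < 2) hSα
        (Real.rpow_pos_of_pos hS _)).mpr h2
      have h4 : Real.logb 2 (S ^ α) = α * Real.logb 2 S := by
        rw [Real.logb, Real.log_rpow hS, Real.logb]; ring
      rwa [h4] at h3
    have hpos : (0:ℝ) ≤ 1 / (1 - α) := by positivity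
    have h5 := mul_le_mul_of_nonneg_left hlog hpos
    refine h5.trans_eq ?_
    rw [h1α]
    rw [hα]
    field_simp
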